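/- Let A be a prime ring (i.e., for all a, b ∈ A, if a·x·b = 0 for every x ∈ A then a = 0 or b = 0, and A is nontrivial) and let f : A → B be an injective ring homomorphism. Then there exists a prime two-sided ideal P of B such that f⁻¹(P) = {0}, i.e., for all a ∈ A, f(a) ∈ P implies a = 0. -/

import Mathlib

/-- A subset `I` of a ring `B` is a two-sided ideal: it contains `0`, is closed under
addition, and is closed under multiplication by arbitrary ring elements on both sides. -/
def IsTwoSidedIdealSet {B : Type*} [Ring B] (I : Set B) : Prop :=
  (0 : B) ∈ I ∧ (∀ a ∈ I, ∀ b ∈ I, a + b ∈ I) ∧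
    (∀ (x : B), ∀ a ∈ I, x * a ∈ I) ∧ (∀ (x : B), ∀ a ∈ I, a * x ∈ I)

/-- A subset `I` of a ring `B` is a prime two-sided ideal: it is a proper two-sided ideal
such that whenever `a * x * b ∈ I` for all `x`, either `a ∈ I` or `b ∈ I`. -/
def IsPrimeTwoSidedIdeal {B : Type*} [Ring B] (I : Set B) : Prop :=
  IsTwoSidedIdealSet I ∧ I ≠ Set.univ ∧
    ∀ a b : B, (∀ x : B, a * x * b ∈ I) → a ∈ I ∨ b ∈ I

/-- If `A` is a prime ring (nontrivial, and `a * x * b = 0` for all `x` forces `a = 0` or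
`b = 0`) and `f : A →+* B` is an injective ring homomorphism, then there is a prime
two-sided ideal `P` of `B` whose preimage under `f` is `{0}`. -/
theorem exists_prime_twoSidedIdeal_preimage_eq_zero {A B : Type*} [Ring A] [Ring B]
    [Nontrivial A] (hprime : ∀ a b : A, (∀ x : A, a * x * b = 0) → a = 0 ∨ b = 0)
    (f : A →+* B) (hf : Function.Injective f) :
    ∃ P : Set B, IsPrimeTwoSidedIdeal P ∧ ⇑f ⁻¹' P = {0} := by
  classical
  -- the m-system
  set S : Set B := f '' {a | a ≠ 0} with hS
  have hS0 : (0 : B) ∉ S := by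
    rintro ⟨a, ha, ha0⟩
    exact ha (hf (by simpa using ha0))
  have hSm : ∀ s ∈ S, ∀ t ∈ S, ∃ x : B, s * x * t ∈ S := by
    rintro _ ⟨a, ha, rfl⟩ _ ⟨b, hb, rfl⟩
    rcases not_forall.1 (fun h => by
      rcases hprime a b h with h' | h' <;> [exact ha h'; exact hb h']) with ⟨x, hx⟩
    exact ⟨f x, ⟨a * x * b, hx, by simp [map_mul]⟩⟩
  -- Zorn on two-sided ideals disjoint from S
  set 𝒯 : Set (TwoSidedIdeal B) := {I | ∀ s ∈ S, s ∉ I} with h𝒯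
  obtain ⟨P, -, hPmax⟩ : ∃ P, (⊥ : TwoSidedIdeal B) ≤ P ∧ Maximal (· ∈ 𝒯) P := by
    refine zorn_le_nonempty₀ 𝒯 ?_ ⊥ ?_
    · intro c hc hchain I hI
      refine ⟨TwoSidedIdeal.mk' {x | ∃ J ∈ c, x ∈ J} ⟨I, hI, TwoSidedIdeal.zero_mem I⟩
        ?_ ?_ ?_ ?_, ?_, ?_⟩
      · rintro x y ⟨J, hJ, hx⟩ ⟨K, hK, hy⟩
        rcases hchain.total hJ hK with h | h
        · exact ⟨K, hK, TwoSidedIdeal.add_mem _ (h hx) hy⟩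
        · exact ⟨J, hJ, TwoSidedIdeal.add_mem _ hx (h hy)⟩
      · rintro x ⟨J, hJ, hx⟩; exact ⟨J, hJ, TwoSidedIdeal.neg_mem _ hx⟩
      · rintro x y ⟨J, hJ, hy⟩; exact ⟨J, hJ, TwoSidedIdeal.mul_mem_left _ _ _ hy⟩
      · rintro x y ⟨J, hJ, hy⟩; exact ⟨J, hJ, TwoSidedIdeal.mul_mem_right _ _ _ hy⟩
      · rintro s hs hsmem
        rw [TwoSidedIdeal.mem_mk'] at hsmem
        rcases hsmem with ⟨J, hJ, hsJ⟩
        exact hc hJ s hs hsJ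
      · intro J hJ x hx
        rw [TwoSidedIdeal.mem_mk']
        exact ⟨J, hJ, hx⟩
    · intro s hs hsmem
      rw [TwoSidedIdeal.mem_bot] at hsmem
      exact hS0 (hsmem ▸ hs)
  have hPS : ∀ s ∈ S, s ∉ P := hPmax.1
  -- key: if a ∉ P then P ⊔ span {a} meets S
  have hmeet : ∀ a : B, a ∉ P → ∃ s ∈ S, s ∈ P ⊔ TwoSidedIdeal.span {a} := by
    intro a ha
    by_contra h
    push_neg at h
    have hle : P ⊔ TwoSidedIdeal.span {a} ≤ P :=
      hPmax.2 (fun s hs => h s hs) le_sup_left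
    exact ha (hle (TwoSidedIdeal.mem_sup_right
      (TwoSidedIdeal.subset_span (Set.mem_singleton a))))
  -- absorption lemma
  have key : ∀ a b : B, (∀ x : B, a * x * b ∈ P) →
      ∀ u ∈ TwoSidedIdeal.span {a}, ∀ v ∈ TwoSidedIdeal.span {b}, ∀ x : B, u * x * v ∈ P := by
    intro a b hab u hu v hv x
    rw [TwoSidedIdeal.mem_span_iff_mem_addSubgroup_closure] at hu hv
    induction hu using AddSubgroup.closure_induction with
    | mem u hu =>
      rw [Set.mem_mul] at hu
      obtain ⟨y, hy, d, -, rfl⟩ := hu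
      rw [Set.mem_mul] at hy
      obtain ⟨c, -, w, hw, rfl⟩ := hy
      rw [Set.mem_singleton_iff] at hw
      subst hw
      induction hv using AddSubgroup.closure_induction with
      | mem v hv =>
        rw [Set.mem_mul] at hv
        obtain ⟨y', hy', g, -, rfl⟩ := hv
        rw [Set.mem_mul] at hy'
        obtain ⟨e, -, w', hw', rfl⟩ := hy'
        rw [Set.mem_singleton_iff] at hw'
        subst hw'
        have : c * w * d * x * (e * w' * g) = c * (w * (d * x * e) * w') * g := by
          noncomm_ring
        rw [this]
        exact TwoSidedIdeal.mul_mem_right _ _ _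
          (TwoSidedIdeal.mul_mem_left _ _ _ (hab _))
      | zero => simpa using P.zero_mem
      | add v₁ v₂ _ _ h1 h2 => rw [mul_add]; exact P.add_mem h1 h2
      | neg v _ h => rw [mul_neg]; exact P.neg_mem h
    | zero => simpa using P.zero_mem
    | add u₁ u₂ _ _ h1 h2 => rw [add_mul, add_mul]; exact P.add_mem h1 h2
    | neg u _ h => rw [neg_mul, neg_mul]; exact P.neg_mem h
  refine ⟨(P : Set B), ⟨⟨P.zero_mem, fun a ha b hb => P.add_mem ha hb,
      fun x a ha => P.mul_mem_left x a ha, fun x a ha => P.mul_mem_right a x ha⟩, ?_, ?_⟩, ?_⟩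
  · -- proper
    intro h
    obtain ⟨a, ha⟩ := exists_ne (0 : A)
    have hm : f a ∈ (P : Set B) := by rw [h]; trivial
    exact hPS (f a) ⟨a, ha, rfl⟩ hm
  · -- prime
    intro a b hab
    by_contra h
    push_neg at h
    obtain ⟨ha, hb⟩ := h
    obtain ⟨s, hsS, hs⟩ := hmeet a ha
    obtain ⟨t, htS, ht⟩ := hmeet b hb
    obtain ⟨x, hx⟩ := hSm s hsS t htS
    refine hPS _ hx ?_
    rw [TwoSidedIdeal.mem_sup] at hs ht
    obtain ⟨p, hp, u, hu, rfl⟩ := hs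
    obtain ⟨q, hq, v, hv, rfl⟩ := ht
    have : (p + u) * x * (q + v) =
        (p * x * (q + v) + u * x * q) + u * x * v := by noncomm_ring
    rw [this]
    refine P.add_mem (P.add_mem ?_ ?_) (key a b hab u hu v hv x)
    · exact P.mul_mem_right _ _ (P.mul_mem_right _ _ hp)
    · exact P.mul_mem_left _ _ hq
  · -- preimage
    ext a
    simp only [Set.mem_preimage, SetLike.mem_coe, Set.mem_singleton_iff]
    constructor
    · intro ha
      by_contra h0
      exact hPS (f a) ⟨a, h0, rfl⟩ ha
    · rintro rfl; simpa using P.zero_mem
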